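/- Let f(t) = (t−1)²(t+1)/t (the symmetric χ²-divergence generator). Then for all x, y ∈ (0,1): 16 ≤ (1/y)·f''(x/y) + (1/(1−y))·f''((1−x)/(1−y)), i.e. 16 ≤ 2/y + 2y²/x³ + 2/(1−y) + 2(1−y)²/(1−x)³, with equality at x = y = 1/2. -/

import Mathlib

lemma chi_sq_lemA (y : ℝ) (hy : 0 < y) (hy1 : y < 1) :
    16 - 32*(y*(1-y)) ≤ 2/y + 2/(1-y) := by
  have h1 : 0 < 1 - y := by linarith
  rw [div_add_div _ _ (ne_of_gt hy) (ne_of_gt h1), le_div_iff₀ (by positivity)]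
  nlinarith [sq_nonneg (4*(y*(1-y)) - 1)]

lemma chi_sq_lemB (x y : ℝ) (hx : 0 < x) (hx1 : x < 1) (hy : 0 < y) (hy1 : y < 1) :
    32*(y*(1-y)) ≤ 2*y^2/x^3 + 2*(1-y)^2/(1-x)^3 := by
  have hx1' : 0 < 1 - x := by linarith
  have hy1' : 0 < 1 - y := by linarith
  set p := x*(1-x) with hp
  set q := y*(1-y) with hq
  have hp0 : 0 < p := mul_pos hx hx1'
  have hq0 : 0 < q := mul_pos hy hy1'
  have hp4 : p ≤ 1/4 := by nlinarith [sq_nonneg (2*x-1)]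
  set a := y^2*(1-x)^3 with ha
  set b := (1-y)^2*x^3 with hb
  have ha0 : 0 ≤ a := by positivity
  have hb0 : 0 ≤ b := by positivity
  have hab : a*b = q^2*p^3 := by rw [ha, hb, hq, hp]; ring
  have h3 : 64*p^3 ≤ 1 := by nlinarith [pow_le_pow_left₀ hp0.le hp4 3]
  have h4 : (16*q*p^3)^2 ≤ 4*(a*b) := by
    rw [hab]
    nlinarith [mul_nonneg (mul_nonneg (sq_nonneg q) (pow_pos hp0 3).le) (sub_nonneg.2 h3)]
  have hsq : (16*q*p^3)^2 ≤ (a+b)^2 := by nlinarith [sq_nonneg (a-b)]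
  have hle : 16*q*p^3 ≤ a + b := by
    nlinarith [hsq, mul_pos (mul_pos hq0 (mul_pos (mul_pos hp0 hp0) hp0)) (by norm_num : (0:ℝ) < 16)]
  rw [div_add_div _ _ (ne_of_gt (pow_pos hx 3)) (ne_of_gt (pow_pos hx1' 3)),
    le_div_iff₀ (by positivity)]
  have hpp : x^3*(1-x)^3 = p^3 := by rw [hp]; ring
  nlinarith [hle]

lemma chi_sq_second_deriv (f : ℝ → ℝ) (hf : f = fun t => (t - 1) ^ 2 * (t + 1) / t)
    {t : ℝ} (ht : 0 < t) :
    deriv (deriv f) t = 2 + 2 / t^3 := by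
  have ev : deriv f =ᶠ[nhds t] (fun s : ℝ => 2*s - 1 - s⁻¹^2) := by
    filter_upwards [eventually_gt_nhds ht] with s hs
    have hs0 : s ≠ 0 := ne_of_gt hs
    have h1 : f =ᶠ[nhds s] (fun u : ℝ => u^2 - u - 1 + u⁻¹) := by
      filter_upwards [eventually_gt_nhds hs] with u hu
      have : u ≠ 0 := ne_of_gt hu
      simp only [hf]; field_simp; ring
    rw [h1.deriv_eq]
    have h2 : HasDerivAt (fun u : ℝ => u^2 - u - 1 + u⁻¹) (2*s - 1 - s⁻¹^2) s := by
      have h3 := (((hasDerivAt_pow 2 s).sub (hasDerivAt_id s)).sub_const 1).add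
        (hasDerivAt_inv hs0)
      refine h3.congr_deriv ?_
      simp [pow_two]
      ring
    exact h2.deriv
  rw [ev.deriv_eq]
  have h2 : HasDerivAt (fun s : ℝ => 2*s - 1 - s⁻¹^2) (2 + 2/t^3) t := by
    have ha : HasDerivAt (fun s : ℝ => 2*s - 1) 2 t := by
      simpa using ((hasDerivAt_id t).const_mul 2).sub_const 1
    have hb : HasDerivAt (fun s : ℝ => s⁻¹^2) (2 * t⁻¹^(2-1) * (-(t^2)⁻¹)) t :=
      (hasDerivAt_inv (ne_of_gt ht)).pow 2
    refine (ha.sub hb).congr_deriv ?_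
    have : t ≠ 0 := ne_of_gt ht
    simp only [show (2:ℕ) - 1 = 1 from rfl, pow_one]
    field_simp
    ring
  exact h2.deriv

/-- For the symmetric χ²-divergence generator `f(t) = (t−1)²(t+1)/t`,
for all `x, y ∈ (0,1)`: `16 ≤ (1/y) f''(x/y) + (1/(1−y)) f''((1−x)/(1−y))`, i.e.
`16 ≤ 2/y + 2y²/x³ + 2/(1−y) + 2(1−y)²/(1−x)³`, with equality at `x = y = 1/2`. -/
theorem pinsker_condition_symmetric_chi_sq (f : ℝ → ℝ)
    (hf : f = fun t => (t - 1) ^ 2 * (t + 1) / t) :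
    (∀ x y : ℝ, 0 < x → x < 1 → 0 < y → y < 1 →
        (16 ≤ (1 / y) * deriv (deriv f) (x / y)
            + (1 / (1 - y)) * deriv (deriv f) ((1 - x) / (1 - y)))
          ∧ 16 ≤ 2 / y + 2 * y ^ 2 / x ^ 3 + 2 / (1 - y) + 2 * (1 - y) ^ 2 / (1 - x) ^ 3)
      ∧ 2 / (1 / 2 : ℝ) + 2 * (1 / 2 : ℝ) ^ 2 / (1 / 2 : ℝ) ^ 3
          + 2 / (1 - 1 / 2 : ℝ) + 2 * (1 - 1 / 2 : ℝ) ^ 2 / (1 - 1 / 2 : ℝ) ^ 3 = 16 := by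
  constructor
  · intro x y hx hx1 hy hy1
    have hx1' : 0 < 1 - x := by linarith
    have hy1' : 0 < 1 - y := by linarith
    have key : (16:ℝ) ≤ 2 / y + 2 * y ^ 2 / x ^ 3 + 2 / (1 - y) + 2 * (1 - y) ^ 2 / (1 - x) ^ 3 := by
      have h1 := chi_sq_lemA y hy hy1
      have h2 := chi_sq_lemB x y hx hx1 hy hy1
      linarith
    refine ⟨?_, key⟩
    have d1 : deriv (deriv f) (x / y) = 2 + 2 / (x/y)^3 :=
      chi_sq_second_deriv f hf (div_pos hx hy)
    have d2 : deriv (deriv f) ((1-x) / (1-y)) = 2 + 2 / ((1-x)/(1-y))^3 :=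
      chi_sq_second_deriv f hf (div_pos hx1' hy1')
    rw [d1, d2]
    have e1 : (1/y) * (2 + 2/(x/y)^3) = 2/y + 2*y^2/x^3 := by
      field_simp
    have e2 : (1/(1-y)) * (2 + 2/((1-x)/(1-y))^3) = 2/(1-y) + 2*(1-y)^2/(1-x)^3 := by
      field_simp
    rw [e1, e2]; linarith
  · norm_num
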